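/- For all f, g ∈ F₃, the element f ⋄ g satisfies f ⋄ g = φ_{l(f)}(g) · f = f · φ_{f(l(f))}(g), where f(l(f)) denotes the address of the image interval f(I_{l(f)}). -/

import Mathlib

open Set
open scoped Classical

noncomputable section

/-- An address: a finite word in the alphabet `{0,1,2}`. -/
abbrev Address : Type := List (Fin 3)

/-- Left endpoint of the triadic interval `I_α`. -/
def addrLeft : Address → ℝ
  | [] => 0
  | i :: α => ((i : ℕ) : ℝ) / 3 + addrLeft α / 3

/-- Length of the triadic interval `I_α`. -/
def addrLen (α : Address) : ℝ := (1 / 3 : ℝ) ^ α.length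

/-- The triadic subinterval `I_α ⊆ [0,1]` determined by the address `α`. -/
def Iaddr (α : Address) : Set ℝ := Set.Icc (addrLeft α) (addrLeft α + addrLen α)

/-- The linear orientation-preserving isomorphism `ψ_α : I_α → [0,1]`. -/
def psi (α : Address) (t : ℝ) : ℝ := (t - addrLeft α) / addrLen α

/-- The inverse `ψ_α⁻¹ : [0,1] → I_α`. -/
def psiInv (α : Address) (t : ℝ) : ℝ := addrLeft α + addrLen α * t

/-- `φ_α(f)` acts as `ψ_α⁻¹ ∘ f ∘ ψ_α` on `I_α` and as the identity elsewhere. -/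
def phi (α : Address) (f : ℝ → ℝ) : ℝ → ℝ :=
  fun t => if t ∈ Iaddr α then psiInv α (f (psi α t)) else t

/-- A triadic rational. -/
def IsTriadic (q : ℝ) : Prop := ∃ a : ℤ, ∃ n : ℕ, q = (a : ℝ) / 3 ^ n

/-- Membership in the Brown–Thompson group `F₃`, realized as piecewise-linear
homeomorphisms of `[0,1]` (extended by the identity to all of `ℝ`) with breakpoints
at triadic rationals and slopes powers of `3`. The group product is `f·g = g ∘ f`. -/
def IsF3 (f : ℝ → ℝ) : Prop :=
  (∀ t, t ∉ Set.Icc (0 : ℝ) 1 → f t = t) ∧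
  Set.BijOn f (Set.Icc 0 1) (Set.Icc 0 1) ∧
  StrictMonoOn f (Set.Icc 0 1) ∧
  ∃ breaks : Finset ℝ, (∀ b ∈ breaks, IsTriadic b) ∧
    ∀ x ∈ Set.Icc (0 : ℝ) 1, x ∉ breaks →
      ∃ (k : ℤ) (c : ℝ), IsTriadic c ∧
        ∀ᶠ y in nhdsWithin x (Set.Icc 0 1), f y = (3 : ℝ) ^ k * y + c

/-- `f` maps `I_α` linearly (preserving orientation, with triadic affine data)
onto the triadic interval `I_β`. -/
def IsTriadicLinearOn (f : ℝ → ℝ) (α β : Address) : Prop :=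
  ∀ t ∈ Iaddr α, f t = psiInv β (psi α t)

/-- The depth of the maximal all-`i` leaf of the reduced domain tree of `f`:
the least `n` such that `f` maps `I_{iⁿ}` linearly onto a triadic interval. -/
def leafExp (i : Fin 3) (f : ℝ → ℝ) : ℕ :=
  sInf {n : ℕ | ∃ β : Address, IsTriadicLinearOn f (List.replicate n i) β}

/-- The address `l(f) = 1ⁿ` of the central leaf of `f` (the leaf of the reduced
domain tree whose interval contains `1/2`). -/
def centralLeaf (f : ℝ → ℝ) : Address := List.replicate (leafExp 1 f) 1

/-- The central monoid operation `f ⋄ g = φ_{l(f)}(g) · f` (recall `a·b = b ∘ a`). -/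
def diam (f g : ℝ → ℝ) : ℝ → ℝ := fun t => f (phi (centralLeaf f) g t)

lemma addrLen_pos (α : Address) : 0 < addrLen α := by
  unfold addrLen; positivity

lemma addr_bounds (α : Address) : 0 ≤ addrLeft α ∧ addrLeft α + addrLen α ≤ 1 := by
  induction α with
  | nil => simp [addrLeft, addrLen]
  | cons i α ih =>
    obtain ⟨h0, h1⟩ := ih
    have hi : ((i : ℕ) : ℝ) ≤ 2 := by
      have := i.is_lt; exact_mod_cast Nat.lt_succ_iff.mp this
    constructor
    · have : (0:ℝ) ≤ ((i : ℕ) : ℝ) := by positivity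
      simp only [addrLeft]; positivity
    · simp only [addrLeft, addrLen, List.length_cons, pow_succ]
      have hlen : addrLen α = (1/3:ℝ) ^ α.length := rfl
      nlinarith [addrLen_pos α]

lemma psi_mem {α : Address} {t : ℝ} (ht : t ∈ Iaddr α) : psi α t ∈ Set.Icc (0:ℝ) 1 := by
  obtain ⟨h1, h2⟩ := ht
  have hl := addrLen_pos α
  constructor
  · apply div_nonneg <;> linarith
  · rw [psi, div_le_one hl]; linarith

lemma psiInv_mem {α : Address} {x : ℝ} (hx : x ∈ Set.Icc (0:ℝ) 1) : psiInv α x ∈ Iaddr α := by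
  obtain ⟨h1, h2⟩ := hx
  have hl := addrLen_pos α
  constructor
  · rw [psiInv]; nlinarith
  · rw [psiInv]; nlinarith

lemma psi_psiInv (α : Address) (x : ℝ) : psi α (psiInv α x) = x := by
  have hl := (addrLen_pos α).ne'
  rw [psi, psiInv, add_sub_cancel_left, mul_div_cancel_left₀ x hl]

/-- `f ⋄ g = φ_{l(f)}(g) · f = f · φ_{f(l(f))}(g)`, where `f(l(f))` is
the address `β` of the image interval `f(I_{l(f)})` (the product is `a·b = b∘a`). -/
theorem diam_eq_phi_mul (f g : ℝ → ℝ) (hf : IsF3 f) (hg : IsF3 g)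
    (β : Address) (hβ : IsTriadicLinearOn f (centralLeaf f) β) :
    diam f g = (fun t => f (phi (centralLeaf f) g t)) ∧
    diam f g = (fun t => phi β g (f t)) := by
  refine ⟨rfl, ?_⟩
  funext t
  set α := centralLeaf f with hα
  obtain ⟨hfout, hfbij, hfmono, -⟩ := hf
  have hsub : Iaddr α ⊆ Set.Icc (0:ℝ) 1 := by
    intro x hx
    obtain ⟨h0, h1⟩ := addr_bounds α
    exact ⟨le_trans h0 hx.1, le_trans hx.2 h1⟩
  have hsubβ : Iaddr β ⊆ Set.Icc (0:ℝ) 1 := by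
    intro x hx
    obtain ⟨h0, h1⟩ := addr_bounds β
    exact ⟨le_trans h0 hx.1, le_trans hx.2 h1⟩
  by_cases ht : t ∈ Iaddr α
  · -- the interesting case
    have hpsit : psi α t ∈ Set.Icc (0:ℝ) 1 := psi_mem ht
    have hgmem : g (psi α t) ∈ Set.Icc (0:ℝ) 1 := hg.2.1.1 hpsit
    have hmem : psiInv α (g (psi α t)) ∈ Iaddr α := psiInv_mem hgmem
    have hft : f t ∈ Iaddr β := by
      rw [hβ t ht]; exact psiInv_mem hpsit
    simp only [diam, ← hα, phi, if_pos ht, if_pos hft]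
    rw [hβ _ hmem, psi_psiInv, hβ t ht, psi_psiInv]
  · -- outside the interval
    have hphi : phi α g t = t := by simp [phi, ht]
    show f (phi α g t) = phi β g (f t)
    rw [hphi]
    by_cases htI : t ∈ Set.Icc (0:ℝ) 1
    · -- f t ∉ Iaddr β
      have hend1 : addrLeft α ∈ Iaddr α := by
        exact ⟨le_refl _, by linarith [addrLen_pos α]⟩
      have hend2 : addrLeft α + addrLen α ∈ Iaddr α := by
        exact ⟨by linarith [addrLen_pos α], le_refl _⟩
      have hf1 : f (addrLeft α) = addrLeft β := by
        rw [hβ _ hend1, psi, psiInv]; simp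
      have hf2 : f (addrLeft α + addrLen α) = addrLeft β + addrLen β := by
        rw [hβ _ hend2, psi, psiInv]
        rw [add_sub_cancel_left, div_self (addrLen_pos α).ne', mul_one]
      have hftβ : f t ∉ Iaddr β := by
        rcases not_and_or.mp ht with h | h
        · push_neg at h
          have := hfmono htI (hsub hend1) h
          intro hc; rw [hf1] at this; exact absurd hc.1 (by linarith)
        · push_neg at h
          have := hfmono (hsub hend2) htI h
          intro hc; rw [hf2] at this; exact absurd hc.2 (by linarith)
      simp [phi, hftβ]
    · have hft : f t = t := hfout t htI
      have hftβ : f t ∉ Iaddr β := fun hc => htI (hsubβ (hft ▸ hc))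
      simp [phi, hftβ]
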